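/- For partitions λ and μ and a sequence of positive integers α = (α_1,…,α_s), the coefficient of the monomial symmetric function m_λ in the product m_μ · p_{α_1}⋯p_{α_s} equals the number of p-brick tabloids of shape λ and extended content (μ;α): tilings of the Young diagram of λ by horizontal bricks consisting of ℓ(μ) bricks labeled 0 of lengths μ_1,…,μ_{ℓ(μ)} and, for each 1 ≤ i ≤ s, one brick labeled i of length α_i, such that every cell is covered exactly once and brick labels strictly increase left to right within each row. -/

import Mathlib

open Classical

/-- The power-sum symmetric function `p_n = Σ_j x_j^n`. -/
noncomputable def pS (n : ℕ) : MvPowerSeries ℕ ℚ :=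
  fun d => if ∃ j, d = Finsupp.single j n then 1 else 0

/-- The monomial symmetric function `m_μ`: the sum of all distinct monomials whose
multiset of (nonzero) exponents is `μ`. -/
noncomputable def mS (mu : Multiset ℕ) : MvPowerSeries ℕ ℚ :=
  fun d => if d.support.val.map (fun j => d j) = mu then 1 else 0

section Aux

variable {s : ℕ} (α : Fin s → ℕ)

/-- The exponent finsupp determined by a row assignment. -/
noncomputable def Trow (row : Fin s → ℕ) : ℕ →₀ ℕ :=
  ∑ i, Finsupp.single (row i) (α i)

lemma Trow_apply (row : Fin s → ℕ) (j : ℕ) :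
    Trow α row j = ∑ i ∈ Finset.univ.filter (fun i => row i = j), α i := by
  rw [Trow, Finsupp.finset_sum_apply, Finset.sum_filter]
  exact Finset.sum_congr rfl fun i _ => by rw [Finsupp.single_apply]

end Aux

/-- A p-brick tabloid of shape `L` (row `j` of the diagram has `L j` cells) and
extended content `(μ; α)` is encoded by: `g : ℕ →₀ ℕ`, where `g j` is the length of
the (at most one) `0`-labeled brick in row `j` (`0` meaning no such brick), and
`row : Fin s → ℕ`, where `row i` is the row containing the unique brick labeled
`i+1` (of length `α i`).  The multiset of lengths of `0`-bricks must be `μ`, and in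
each row the brick lengths must add up to the row length.  (Labels strictly
increase from left to right within a row, so this data determines the tiling.) -/
theorem coeff_m_mul_prod_p_eq_card_pBrickTabloids
    (lam mu : Multiset ℕ) (hlam : 0 ∉ lam) (hmu : 0 ∉ mu)
    (s : ℕ) (α : Fin s → ℕ) (hα : ∀ i, 0 < α i)
    (L : ℕ →₀ ℕ) (hL : L.support.val.map (fun j => L j) = lam) :
    MvPowerSeries.coeff L (mS mu * ∏ i, pS (α i))
      = (Nat.card {T : (ℕ →₀ ℕ) × (Fin s → ℕ) //
          T.1.support.val.map (fun j => T.1 j) = mu ∧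
          ∀ j, T.1 j + ∑ i ∈ Finset.univ.filter (fun i => T.2 i = j), α i = L j} : ℚ) := by
  classical
  -- the big finite index set
  set B : Finset (Σ _ : (ℕ →₀ ℕ) × (ℕ →₀ ℕ), (Fin s →₀ (ℕ →₀ ℕ))) :=
    (Finset.HasAntidiagonal.antidiagonal L).sigma (fun p => Finset.finsuppAntidiag Finset.univ p.2) with hB
  set Pred : (Σ _ : (ℕ →₀ ℕ) × (ℕ →₀ ℕ), (Fin s →₀ (ℕ →₀ ℕ))) → Prop :=
    fun x => x.1.1.support.val.map (fun j => x.1.1 j) = mu ∧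
      ∀ i, ∃ j, x.2 i = Finsupp.single j (α i) with hPred
  have step1 : MvPowerSeries.coeff L (mS mu * ∏ i, pS (α i))
      = ((B.filter Pred).card : ℚ) := by
    rw [MvPowerSeries.coeff_mul]
    have : ∀ p : (ℕ →₀ ℕ) × (ℕ →₀ ℕ),
        MvPowerSeries.coeff p.1 (mS mu) * MvPowerSeries.coeff p.2 (∏ i, pS (α i))
        = ∑ l ∈ Finset.finsuppAntidiag Finset.univ p.2,
            (if (p.1.support.val.map (fun j => p.1 j) = mu ∧
                ∀ i, ∃ j, l i = Finsupp.single j (α i)) then (1 : ℚ) else 0) := by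
      intro p
      rw [MvPowerSeries.coeff_prod, Finset.mul_sum]
      refine Finset.sum_congr rfl fun l _ => ?_
      have h1 : MvPowerSeries.coeff p.1 (mS mu)
          = (if p.1.support.val.map (fun j => p.1 j) = mu then (1 : ℚ) else 0) := rfl
      have h2 : ∀ i : Fin s, MvPowerSeries.coeff (l i) (pS (α i))
          = (if ∃ j, l i = Finsupp.single j (α i) then (1 : ℚ) else 0) := fun i => rfl
      simp only [h1]
      rw [Finset.prod_congr rfl (fun i _ => h2 i), Finset.prod_boole, ite_and]
      simp only [Finset.mem_univ, forall_true_left, mul_ite, mul_one, mul_zero]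
      split_ifs <;> simp_all
    rw [Finset.sum_congr rfl (fun p _ => this p), Finset.sum_sigma', hB]
    rw [Finset.sum_boole]
  rw [step1]
  congr 1
  -- now the cardinality identification
  rw [← Nat.card_eq_finsetCard]
  apply Nat.card_congr
  symm
  refine Equiv.ofBijective (fun T => ⟨⟨⟨T.1.1, Trow α T.1.2⟩,
      Finsupp.equivFunOnFinite.symm (fun i => Finsupp.single (T.1.2 i) (α i))⟩, ?_⟩) ⟨?_, ?_⟩
  · -- membership in the filtered finset
    obtain ⟨⟨g, row⟩, h1, h2⟩ := T
    simp only [Finset.mem_filter, hB, Finset.mem_sigma, Finset.HasAntidiagonal.mem_antidiagonal,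
      Finset.mem_finsuppAntidiag]
    refine ⟨⟨?_, ?_, fun j _ => Finset.mem_univ j⟩, h1, fun i => ⟨row i, ?_⟩⟩
    · ext j
      simp only [Finsupp.add_apply, Trow_apply]
      exact h2 j
    · ext i
      simp [Trow]
    · simp
  · -- injective
    rintro ⟨⟨g, row⟩, hg⟩ ⟨⟨g', row'⟩, hg'⟩ h
    have hv := congrArg Subtype.val h
    have h1 : g = g' :=
      congrArg (fun x : (Σ _ : (ℕ →₀ ℕ) × (ℕ →₀ ℕ), (Fin s →₀ (ℕ →₀ ℕ))) => x.1.1) hv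
    have h2 := congrArg (fun x : (Σ _ : (ℕ →₀ ℕ) × (ℕ →₀ ℕ), (Fin s →₀ (ℕ →₀ ℕ))) => x.2) hv
    simp only at h2
    have hrow : row = row' := by
      funext i
      have h3 := congrArg (fun f => Finsupp.equivFunOnFinite f i) h2
      simp only [Equiv.apply_symm_apply] at h3
      exact Finsupp.single_left_injective (hα i).ne' h3
    exact Subtype.ext (Prod.ext h1 hrow)
  · -- surjective
    rintro ⟨⟨⟨d, e⟩, l⟩, hx⟩
    simp only [Finset.mem_filter, hB, Finset.mem_sigma, Finset.HasAntidiagonal.mem_antidiagonal,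
      Finset.mem_finsuppAntidiag] at hx
    obtain ⟨⟨hde, hsum, -⟩, hmult, hex⟩ := hx
    dsimp only at hmult hex
    set row : Fin s → ℕ := fun i => Classical.choose (hex i) with hrow
    have hl : ∀ i, l i = Finsupp.single (row i) (α i) := fun i => Classical.choose_spec (hex i)
    have he : e = Trow α row := by
      rw [← hsum, Trow]
      exact Finset.sum_congr rfl fun i _ => hl i
    refine ⟨⟨⟨d, row⟩, hmult, fun j => ?_⟩, ?_⟩
    · have := congrArg (fun f : ℕ →₀ ℕ => f j) hde
      simp only [Finsupp.add_apply] at this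
      rw [← this, he, Trow_apply]
    · subst he
      have hlf : Finsupp.equivFunOnFinite.symm (fun i => Finsupp.single (row i) (α i)) = l := by
        ext i j
        rw [show (Finsupp.equivFunOnFinite.symm (fun i => Finsupp.single (row i) (α i))) i
          = Finsupp.single (row i) (α i) from rfl, hl i]
      apply Subtype.ext
      show (⟨(d, Trow α row), Finsupp.equivFunOnFinite.symm fun i => Finsupp.single (row i) (α i)⟩
        : Σ _ : (ℕ →₀ ℕ) × (ℕ →₀ ℕ), (Fin s →₀ (ℕ →₀ ℕ))) = ⟨(d, Trow α row), l⟩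
      rw [hlf]
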